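/- Let A, B ⊆ ℝⁿ be nonempty closed sets, 0 < λ₋ ≤ λₖ ≤ λ₊ and 0 < μ₋ ≤ μₖ ≤ μ₊ for all k, and ζ ∈ (0,1]. Let the sequences (xᵏ) ⊆ A, (yᵏ) ⊆ B satisfy, for every k: (a) (1/2)‖x^{k+1} − yᵏ‖² + (1/(2λₖ))‖x^{k+1} − xᵏ‖² ≤ (1/2)‖x − yᵏ‖² + (1/(2λₖ))‖x − xᵏ‖² for all x ∈ A; (b) with Q^{k+1}(y) = (1/(2μₖ))‖y − yᵏ‖² + (1/2)‖x^{k+1} − y‖² − (1/2)‖x^{k+1} − yᵏ‖², the point ŷ^{k+1} ∈ B satisfies Q^{k+1}(ŷ^{k+1}) ≤ Q^{k+1}(b) for all b ∈ B; (c) y^{k+1} ∈ B satisfies Q^{k+1}(y^{k+1}) ≤ ζ·Q^{k+1}(ŷ^{k+1}) and ‖y^{k+1} − ŷ^{k+1}‖ ≤ sqrt(−((1−ζ)/ζ)·Q^{k+1}(y^{k+1})). Then: the series ∑ₖ (‖x^{k+1} − xᵏ‖² + ‖y^{k+1} − yᵏ‖² − Q^{k+1}(y^{k+1})) converges; γₖ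 := −((1−ζ)/ζ)·Q^{k+1}(ŷ^{k+1}) → 0; ‖ŷ^{k+1} − y^{k+1}‖ → 0; and ρₖ := sqrt((1/μ_{k-1})‖ŷᵏ − y^{k-1}‖² − 2((1−ζ)/ζ)·Qᵏ(yᵏ)) → 0. -/

import Mathlib

open Filter Topology

theorem stmt_7 {n : ℕ} (A B : Set (EuclideanSpace ℝ (Fin n)))
    (hAne : A.Nonempty) (hAclosed : IsClosed A)
    (hBne : B.Nonempty) (hBclosed : IsClosed B)
    (lamm lamp mum mup ζ : ℝ) (hlamm : 0 < lamm) (hmum : 0 < mum)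
    (hζ : ζ ∈ Set.Ioc (0 : ℝ) 1)
    (lam mu : ℕ → ℝ)
    (hlam : ∀ k, lamm ≤ lam k ∧ lam k ≤ lamp)
    (hmu : ∀ k, mum ≤ mu k ∧ mu k ≤ mup)
    (x y yhat : ℕ → EuclideanSpace ℝ (Fin n))
    (hxA : ∀ k, x k ∈ A) (hyB : ∀ k, y k ∈ B) (hyhatB : ∀ k, yhat (k + 1) ∈ B)
    -- (a) exact regularized projection onto A
    (hxmin : ∀ k, ∀ z ∈ A,
      (1 / 2) * ‖x (k + 1) - y k‖ ^ 2 + (1 / (2 * lam k)) * ‖x (k + 1) - x k‖ ^ 2 ≤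
        (1 / 2) * ‖z - y k‖ ^ 2 + (1 / (2 * lam k)) * ‖z - x k‖ ^ 2)
    -- Q k is the function Q^{k+1}
    (Q : ℕ → EuclideanSpace ℝ (Fin n) → ℝ)
    (hQ : ∀ k v, Q k v =
      (1 / (2 * mu k)) * ‖v - y k‖ ^ 2 + (1 / 2) * ‖x (k + 1) - v‖ ^ 2
        - (1 / 2) * ‖x (k + 1) - y k‖ ^ 2)
    -- (b) yhat (k+1) is an exact minimizer of Q^{k+1} over B
    (hyhatmin : ∀ k, ∀ b ∈ B, Q k (yhat (k + 1)) ≤ Q k b)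
    -- (c) inexactness conditions
    (hinex1 : ∀ k, Q k (y (k + 1)) ≤ ζ * Q k (yhat (k + 1)))
    (hinex2 : ∀ k, ‖y (k + 1) - yhat (k + 1)‖ ≤
      Real.sqrt (-((1 - ζ) / ζ) * Q k (y (k + 1)))) :
    Summable (fun k : ℕ =>
        ‖x (k + 1) - x k‖ ^ 2 + ‖y (k + 1) - y k‖ ^ 2 - Q k (y (k + 1))) ∧
      Tendsto (fun k : ℕ => -((1 - ζ) / ζ) * Q k (yhat (k + 1))) atTop (𝓝 0) ∧
        Tendsto (fun k : ℕ => ‖yhat (k + 1) - y (k + 1)‖) atTop (𝓝 0) ∧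
          Tendsto (fun k : ℕ =>
              Real.sqrt ((1 / mu k) * ‖yhat (k + 1) - y k‖ ^ 2
                - 2 * ((1 - ζ) / ζ) * Q k (y (k + 1)))) atTop (𝓝 0) := by
  
  obtain ⟨hζ0, hζ1⟩ := hζ
  have hlampos : ∀ k, 0 < lam k := fun k => lt_of_lt_of_le hlamm (hlam k).1
  have hmupos : ∀ k, 0 < mu k := fun k => lt_of_lt_of_le hmum (hmu k).1
  have hlamp : 0 < lamp := lt_of_lt_of_le (hlampos 0) (hlam 0).2
  have hmup : 0 < mup := lt_of_lt_of_le (hmupos 0) (hmu 0).2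
  have hα0 : (0:ℝ) ≤ (1 - ζ)/ζ := div_nonneg (by linarith) hζ0.le
  have hQyk : ∀ k, Q k (y k) = 0 := by
    intro k; rw [hQ]; simp
  have hQhat : ∀ k, Q k (yhat (k+1)) ≤ 0 := fun k =>
    (hQyk k) ▸ hyhatmin k (y k) (hyB k)
  have hQy : ∀ k, Q k (y (k+1)) ≤ 0 := by
    intro k
    have h1 := hinex1 k
    nlinarith [hQhat k]
  set d : ℕ → ℝ := fun k => (1/2) * ‖x k - y k‖^2 with hd
  have hdnn : ∀ k, 0 ≤ d k := fun k => by positivity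
  set g : ℕ → ℝ := fun k => d k - d (k+1) with hg
  have key : ∀ k, (1/(2*lam k)) * ‖x (k+1) - x k‖^2
      + (1/(2*mu k)) * ‖y (k+1) - y k‖^2 + (- Q k (y (k+1))) ≤ g k := by
    intro k
    have h1 := hxmin k (x k) (hxA k)
    rw [sub_self, norm_zero] at h1
    have h2 := hQ k (y (k+1))
    simp only [hg, hd]
    nlinarith [h1, h2]
  clear_value d g
  have hgnn : ∀ k, 0 ≤ g k := by
    intro k
    have h1 : 0 ≤ (1/(2*lam k)) * ‖x (k+1) - x k‖^2 := by
      have := hlampos k; positivity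
    have h2 : 0 ≤ (1/(2*mu k)) * ‖y (k+1) - y k‖^2 := by
      have := hmupos k; positivity
    have h3 := hQy k
    linarith [key k]
  have hgsum : Summable g := by
    apply summable_of_sum_range_le hgnn
    intro m
    have : ∑ i ∈ Finset.range m, g i = d 0 - d m := by
      simp only [hg]
      exact Finset.sum_range_sub' d m
    rw [this]
    linarith [hdnn m]
  -- summability of the three pieces
  have hs1 : Summable (fun k => ‖x (k+1) - x k‖^2) := by
    refine Summable.of_nonneg_of_le (fun k => by positivity) (fun k => ?_)
      (hgsum.mul_left (2*lamp))
    have h3 : (1/(2*lam k)) * ‖x (k+1) - x k‖^2 ≤ g k := by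
      have h2 : 0 ≤ (1/(2*mu k)) * ‖y (k+1) - y k‖^2 := by
        have := hmupos k; positivity
      linarith [key k, hQy k]
    have h5 : (1/(2*lamp)) * ‖x (k+1) - x k‖^2 ≤ (1/(2*lam k)) * ‖x (k+1) - x k‖^2 := by
      apply mul_le_mul_of_nonneg_right _ (by positivity)
      apply one_div_le_one_div_of_le (by linarith [hlampos k]) (by linarith [(hlam k).2])
    have h6 : (1/(2*lamp)) * ‖x (k+1) - x k‖^2 ≤ g k := le_trans h5 h3
    rw [one_div_mul_eq_div, div_le_iff₀ (by linarith : (0:ℝ) < 2*lamp)] at h6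
    linarith [h6]
  have hs2 : Summable (fun k => ‖y (k+1) - y k‖^2) := by
    refine Summable.of_nonneg_of_le (fun k => by positivity) (fun k => ?_)
      (hgsum.mul_left (2*mup))
    have h3 : (1/(2*mu k)) * ‖y (k+1) - y k‖^2 ≤ g k := by
      have h2 : 0 ≤ (1/(2*lam k)) * ‖x (k+1) - x k‖^2 := by
        have := hlampos k; positivity
      linarith [key k, hQy k]
    have h5 : (1/(2*mup)) * ‖y (k+1) - y k‖^2 ≤ (1/(2*mu k)) * ‖y (k+1) - y k‖^2 := by
      apply mul_le_mul_of_nonneg_right _ (by positivity)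
      apply one_div_le_one_div_of_le (by linarith [hmupos k]) (by linarith [(hmu k).2])
    have h6 : (1/(2*mup)) * ‖y (k+1) - y k‖^2 ≤ g k := le_trans h5 h3
    rw [one_div_mul_eq_div, div_le_iff₀ (by linarith : (0:ℝ) < 2*mup)] at h6
    linarith [h6]
  have hs3 : Summable (fun k => - Q k (y (k+1))) := by
    refine Summable.of_nonneg_of_le (fun k => by linarith [hQy k]) (fun k => ?_) hgsum
    have h1 : 0 ≤ (1/(2*lam k)) * ‖x (k+1) - x k‖^2 := by
      have := hlampos k; positivity
    have h2 : 0 ≤ (1/(2*mu k)) * ‖y (k+1) - y k‖^2 := by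
      have := hmupos k; positivity
    linarith [key k]
  have hsum : Summable (fun k : ℕ =>
      ‖x (k + 1) - x k‖ ^ 2 + ‖y (k + 1) - y k‖ ^ 2 - Q k (y (k + 1))) := by
    have := (hs1.add hs2).add hs3
    refine this.congr (fun k => by ring)
  -- limits
  have hT3 : Tendsto (fun k => - Q k (y (k+1))) atTop (𝓝 0) := hs3.tendsto_atTop_zero
  have hT2 : Tendsto (fun k => ‖y (k+1) - y k‖^2) atTop (𝓝 0) := hs2.tendsto_atTop_zero
  -- gamma tendsto 0
  have hγ : Tendsto (fun k : ℕ => -((1 - ζ) / ζ) * Q k (yhat (k + 1))) atTop (𝓝 0) := by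
    have hub : Tendsto (fun k => ((1 - ζ)/ζ/ζ) * (- Q k (y (k+1)))) atTop (𝓝 0) := by
      simpa using hT3.const_mul ((1 - ζ)/ζ/ζ)
    refine tendsto_of_tendsto_of_tendsto_of_le_of_le tendsto_const_nhds hub
      (fun k => ?_) (fun k => ?_)
    · have := mul_nonneg hα0 (neg_nonneg.mpr (hQhat k))
      linarith [this]
    · have h5 : -Q k (yhat (k+1)) ≤ (-Q k (y (k+1)))/ζ := by
        rw [le_div_iff₀ hζ0]
        nlinarith [hinex1 k]
      have h6 := mul_le_mul_of_nonneg_left h5 hα0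
      have hζ0' : ζ ≠ 0 := ne_of_gt hζ0
      calc -((1 - ζ) / ζ) * Q k (yhat (k + 1))
          = ((1 - ζ)/ζ) * (-Q k (yhat (k+1))) := by ring
        _ ≤ ((1 - ζ)/ζ) * ((-Q k (y (k+1)))/ζ) := h6
        _ = ((1 - ζ)/ζ/ζ) * (- Q k (y (k+1))) := by ring
  -- tendsto of -α * Q(y)
  have hαQ : Tendsto (fun k => -((1 - ζ)/ζ) * Q k (y (k+1))) atTop (𝓝 0) := by
    have := hT3.const_mul ((1 - ζ)/ζ)
    simpa [mul_comm] using this.congr (fun k => by ring)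
  have hsqrt0 : ∀ {f : ℕ → ℝ}, Tendsto f atTop (𝓝 0) →
      Tendsto (fun k => Real.sqrt (f k)) atTop (𝓝 0) := by
    intro f hf
    have := (Real.continuous_sqrt.tendsto 0).comp hf
    simpa [Function.comp_def] using this
  have hubsq : Tendsto (fun k => Real.sqrt (-((1 - ζ)/ζ) * Q k (y (k+1)))) atTop (𝓝 0) :=
    hsqrt0 hαQ
  have hhaty : Tendsto (fun k : ℕ => ‖yhat (k + 1) - y (k + 1)‖) atTop (𝓝 0) := by
    refine tendsto_of_tendsto_of_tendsto_of_le_of_le tendsto_const_nhds hubsq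
      (fun k => norm_nonneg _) (fun k => ?_)
    rw [norm_sub_rev]
    exact hinex2 k
  -- rho tendsto 0
  have hΔy : Tendsto (fun k => ‖y (k+1) - y k‖) atTop (𝓝 0) := by
    have heq : (fun k => ‖y (k+1) - y k‖) = fun k => Real.sqrt (‖y (k+1) - y k‖^2) := by
      funext k; rw [Real.sqrt_sq (norm_nonneg _)]
    rw [heq]
    exact hsqrt0 hT2
  have hyyk : Tendsto (fun k => ‖yhat (k+1) - y k‖) atTop (𝓝 0) := by
    have hub := hhaty.add hΔy
    rw [add_zero] at hub
    refine tendsto_of_tendsto_of_tendsto_of_le_of_le tendsto_const_nhds hub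
      (fun k => norm_nonneg _) (fun k => ?_)
    calc ‖yhat (k+1) - y k‖ = ‖(yhat (k+1) - y (k+1)) + (y (k+1) - y k)‖ := by
          congr 1; abel
      _ ≤ ‖yhat (k+1) - y (k+1)‖ + ‖y (k+1) - y k‖ := norm_add_le _ _
  have hyyk2 : Tendsto (fun k => ‖yhat (k+1) - y k‖^2) atTop (𝓝 0) := by
    have := hyyk.pow 2
    simpa using this
  have hb : Tendsto (fun k => (1/mu k) * ‖yhat (k+1) - y k‖^2) atTop (𝓝 0) := by
    have hub := hyyk2.const_mul (1/mum)
    rw [mul_zero] at hub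
    refine tendsto_of_tendsto_of_tendsto_of_le_of_le tendsto_const_nhds hub
      (fun k => ?_) (fun k => ?_)
    · have := hmupos k; positivity
    · apply mul_le_mul_of_nonneg_right _ (by positivity)
      apply one_div_le_one_div_of_le hmum (hmu k).1
  have hc : Tendsto (fun k => 2 * ((1 - ζ)/ζ) * (- Q k (y (k+1)))) atTop (𝓝 0) := by
    have := hT3.const_mul (2 * ((1 - ζ)/ζ))
    simpa using this
  have ha : Tendsto (fun k => (1 / mu k) * ‖yhat (k + 1) - y k‖ ^ 2
      - 2 * ((1 - ζ) / ζ) * Q k (y (k + 1))) atTop (𝓝 0) := by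
    have := hb.add hc
    rw [add_zero] at this
    exact this.congr (fun k => by ring)
  exact ⟨hsum, hγ, hhaty, hsqrt0 ha⟩
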